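/- Let R = (V, ≤, ρ_1, …, ρ_k) be an ordered binary structure of type k such that the equivalence relation ≃_R has infinitely many equivalence classes. Then one of the following holds: (1) there is an infinite subset A ⊆ V such that any two distinct elements of A are ≃_{0,R}-equivalent but not ≃_{1,R}-equivalent; (2) there are two disjoint infinite subsets A_1, A_2 of V such that any two distinct elements of A_i (for i ∈ {1,2}) are ≃_{1,R}-equivalent but not ≃_{2,R}-equivalent, and for every x, y ∈ A_i with x < y the interval [x,y] meets A_j for j ≠ i. -/

import Mathlib

/-- An ordered binary structure: a domain `V`, a linear order `le` on `V`,
and a family of binary relations `rel i` on `V` indexed by `ι`. -/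
structure OrdBin (ι : Type) where
  V : Type
  le : V → V → Prop
  linear : IsLinearOrder V le
  rel : ι → V → V → Prop

namespace OrdBin

variable {ι : Type}

/-- The substructure induced on a subset `A` of the domain. -/
def restrict (R : OrdBin ι) (A : Set R.V) : OrdBin ι where
  V := A
  le := fun a b => R.le a.1 b.1
  linear := by
    haveI := R.linear
    exact
      { refl := fun a => refl_of R.le a.1
        trans := fun a b c hab hbc => trans_of R.le hab hbc
        antisymm := fun a b hab hba => Subtype.ext (antisymm_of R.le hab hba)
        total := fun a b => total_of R.le a.1 b.1 }
  rel := fun i a b => R.rel i a.1 b.1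

/-- Isomorphism of ordered binary structures: a bijection of the domains preserving
the linear order and each binary relation. -/
def Iso (R S : OrdBin ι) : Prop :=
  ∃ e : R.V ≃ S.V, (∀ x y : R.V, R.le x y ↔ S.le (e x) (e y)) ∧
    ∀ (i : ι) (x y : R.V), R.rel i x y ↔ S.rel i (e x) (e y)

/-- `R` embeds in `S` if `R` is isomorphic to an induced substructure of `S`. -/
def Embeds (R S : OrdBin ι) : Prop :=
  ∃ A : Set S.V, Iso R (S.restrict A)

/-- `B` is a monomorphic part of `R`: any two finite subsets of the domain of the
same cardinality which agree outside `B` induce isomorphic substructures. -/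
def MonoPart (R : OrdBin ι) (B : Set R.V) : Prop :=
  ∀ A A' : Set R.V, A.Finite → A'.Finite → A.ncard = A'.ncard →
    A \ B = A' \ B → Iso (R.restrict A) (R.restrict A')

/-- A monomorphic decomposition of `R`: a partition of the domain into monomorphic parts. -/
def MonoDecomp (R : OrdBin ι) (P : Set (Set R.V)) : Prop :=
  Setoid.IsPartition P ∧ ∀ B ∈ P, R.MonoPart B

/-- `R` has a monomorphic decomposition with finitely many blocks. -/
def HasFiniteMonoDecomp (R : OrdBin ι) : Prop :=
  ∃ P : Set (Set R.V), R.MonoDecomp P ∧ P.Finite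

/-- A hereditary class of finite ordered binary structures. -/
def Hereditary (C : Set (OrdBin ι)) : Prop :=
  (∀ R ∈ C, Finite R.V) ∧ ∀ R ∈ C, ∀ S : OrdBin ι, Embeds S R → S ∈ C

/-- `x` and `y` are `F`-equivalent: the substructures induced on `{x} ∪ F` and
`{y} ∪ F` are isomorphic. -/
def EqF (R : OrdBin ι) (F : Set R.V) (x y : R.V) : Prop :=
  Iso (R.restrict (insert x F)) (R.restrict (insert y F))

/-- `x ≃_{m,R} y`: `x` and `y` are `F`-equivalent for every `m`-element subset `F`
of `V \ {x, y}`. -/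
def EqM (R : OrdBin ι) (m : ℕ) (x y : R.V) : Prop :=
  ∀ F : Set R.V, F.Finite → F.ncard = m → x ∉ F → y ∉ F → EqF R F x y

/-- `x ≃_{≤m,R} y`: `x ≃_{m',R} y` for every `m' ≤ m`. -/
def EqLe (R : OrdBin ι) (m : ℕ) (x y : R.V) : Prop :=
  ∀ m' ≤ m, EqM R m' x y

/-- `x ≃_R y`: `x ≃_{m,R} y` for every `m`. -/
def EqR (R : OrdBin ι) (x y : R.V) : Prop :=
  ∀ m : ℕ, EqM R m x y

/-- `d(x,y) = d(x',y')`: the pair of truth values `(ρ_i(x,y), ρ_i(y,x))` agrees with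
`(ρ_i(x',y'), ρ_i(y',x'))` for every `i`. -/
def dEq (R : OrdBin ι) (x y x' y' : R.V) : Prop :=
  ∀ i : ι, (R.rel i x y ↔ R.rel i x' y') ∧ (R.rel i y x ↔ R.rel i y' x')

/-- `A` is an interval of the linear order `(V, le)`. -/
def IntervalLe (R : OrdBin ι) (A : Set R.V) : Prop :=
  ∀ u ∈ A, ∀ w ∈ A, ∀ z : R.V, R.le u z → R.le z w → z ∈ A

/-- `A` is an interval of `R`: an interval of the order such that all elements of `A`
have the same relations to each element outside `A`. -/
def IntervalR (R : OrdBin ι) (A : Set R.V) : Prop :=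
  IntervalLe R A ∧ ∀ u ∈ A, ∀ u' ∈ A, ∀ w ∉ A, dEq R u w u' w

/-- `R` is `n`-monomorphic: the substructures induced on any two `n`-element subsets
of the domain are isomorphic. -/
def NMono (R : OrdBin ι) (n : ℕ) : Prop :=
  ∀ A A' : Set R.V, A.Finite → A'.Finite → A.ncard = n → A'.ncard = n →
    Iso (R.restrict A) (R.restrict A')

/-- `R` is `(≤n)`-monomorphic. -/
def LeMono (R : OrdBin ι) (n : ℕ) : Prop :=
  ∀ m ≤ n, NMono R m

/-- `R` is monomorphic. -/
def Mono (R : OrdBin ι) : Prop :=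
  ∀ n : ℕ, NMono R n

/-- The profile of `R`: the number of induced substructures on `n`-element subsets
of the domain, counted up to isomorphism. -/
noncomputable def profileR (R : OrdBin ι) (n : ℕ) : ℕ :=
  Nat.card (Quot fun (A B : {A : Set R.V // A.Finite ∧ A.ncard = n}) =>
    Iso (R.restrict A.1) (R.restrict B.1))

/-- The profile of a class `C`: the number of members of `C` with exactly `n`
elements, counted up to isomorphism. -/
noncomputable def profileC (C : Set (OrdBin ι)) (n : ℕ) : ℕ :=
  Nat.card (Quot fun (R S : {R : OrdBin ι // R ∈ C ∧ Nat.card R.V = n}) =>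
    Iso R.1 S.1)

end OrdBin

/-- The Fibonacci sequence with `F 0 = F 1 = 1`. -/
def fib1 : ℕ → ℕ
  | 0 => 1
  | 1 => 1
  | n + 2 => fib1 (n + 1) + fib1 n
namespace OrdBin

variable {ι : Type}

/-- A `LinearOrder` structure on the domain of `R`. -/
noncomputable def LO (R : OrdBin ι) : LinearOrder R.V :=
  haveI := R.linear
  { le := R.le
    le_refl := fun a => refl_of R.le a
    le_trans := fun _ _ _ => trans_of R.le
    le_antisymm := fun _ _ => antisymm_of R.le
    le_total := fun a b => total_of R.le a b
    toDecidableLE := fun _ _ => Classical.propDecidable _ }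

lemma iso_refl (R : OrdBin ι) : Iso R R :=
  ⟨Equiv.refl _, fun _ _ => Iff.rfl, fun _ _ _ => Iff.rfl⟩

lemma iso_symm {R S : OrdBin ι} (h : Iso R S) : Iso S R := by
  obtain ⟨e, h1, h2⟩ := h
  refine ⟨e.symm, fun a b => ?_, fun i a b => ?_⟩
  · rw [h1 (e.symm a) (e.symm b), e.apply_symm_apply, e.apply_symm_apply]
  · rw [h2 i (e.symm a) (e.symm b), e.apply_symm_apply, e.apply_symm_apply]

lemma iso_trans {R S T : OrdBin ι} (h : Iso R S) (h' : Iso S T) : Iso R T := by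
  obtain ⟨e, h1, h2⟩ := h
  obtain ⟨f, g1, g2⟩ := h'
  exact ⟨e.trans f, fun a b => (h1 a b).trans (g1 (e a) (e b)),
    fun i a b => (h2 i a b).trans (g2 i (e a) (e b))⟩

lemma eqF_refl (R : OrdBin ι) (F : Set R.V) (x : R.V) : EqF R F x x := iso_refl _

lemma eqM_refl (R : OrdBin ι) (m : ℕ) (x : R.V) : EqM R m x x :=
  fun _ _ _ _ _ => iso_refl _

lemma eqM_symm {R : OrdBin ι} {m : ℕ} {x y : R.V} (h : EqM R m x y) : EqM R m y x :=
  fun F hf hc hx hy => iso_symm (h F hf hc hy hx)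

lemma eqM_trans {R : OrdBin ι} {m : ℕ} {x y z : R.V}
    (hxy : EqM R m x y) (hyz : EqM R m y z) : EqM R m x z := by
  classical
  by_cases hxz : x = z
  · subst hxz; exact eqM_refl R m x
  by_cases h1 : x = y
  · subst h1; exact hyz
  by_cases h2 : y = z
  · subst h2; exact hxy
  intro F hFf hc hxF hzF
  by_cases hyF : y ∈ F
  · have hGf : (F \ {y}).Finite := hFf.diff
    have hxG : x ∉ F \ {y} := fun h => hxF h.1
    have hyG : y ∉ F \ {y} := fun h => h.2 rfl
    have hzG : z ∉ F \ {y} := fun h => hzF h.1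
    have hcG : (F \ {y}).ncard + 1 = m := by
      rw [Set.ncard_diff_singleton_add_one hyF hFf, hc]
    have hA : Iso (R.restrict (insert x (insert z (F \ {y}))))
        (R.restrict (insert y (insert z (F \ {y})))) :=
      hxy (insert z (F \ {y})) (hGf.insert z)
        (by rw [Set.ncard_insert_of_notMem hzG hGf, hcG])
        (by simp only [Set.mem_insert_iff]; push_neg; exact ⟨hxz, hxG⟩)
        (by simp only [Set.mem_insert_iff]; push_neg; exact ⟨h2, hyG⟩)
    have hB : Iso (R.restrict (insert y (insert x (F \ {y}))))
        (R.restrict (insert z (insert x (F \ {y})))) :=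
      hyz (insert x (F \ {y})) (hGf.insert x)
        (by rw [Set.ncard_insert_of_notMem hxG hGf, hcG])
        (by simp only [Set.mem_insert_iff]; push_neg; exact ⟨fun h => h1 h.symm, hyG⟩)
        (by simp only [Set.mem_insert_iff]; push_neg; exact ⟨fun h => hxz h.symm, hzG⟩)
    have e1 : insert y (insert x (F \ {y})) = insert x F := by
      ext v; by_cases hv : v = y <;>
        simp only [Set.mem_insert_iff, Set.mem_diff, Set.mem_singleton_iff, hv] <;> tauto
    have e2 : insert z (insert x (F \ {y})) = insert x (insert z (F \ {y})) :=
      Set.insert_comm _ _ _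
    have e3 : insert y (insert z (F \ {y})) = insert z F := by
      ext v; by_cases hv : v = y <;>
        simp only [Set.mem_insert_iff, Set.mem_diff, Set.mem_singleton_iff, hv] <;> tauto
    rw [e1, e2] at hB
    rw [e3] at hA
    exact iso_trans hB hA
  · exact iso_trans (hxy F hFf hc hxF hyF) (hyz F hFf hc hyF hzF)

lemma chain2 (R : OrdBin ι) {p q α β : R.V} (hpq : R.le p q) (hpq' : p ≠ q)
    (hα : α = p ∨ α = q) (hβ : β = p ∨ β = q)
    (h1 : R.le α β) (n1 : α ≠ β) : α = p ∧ β = q := by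
  haveI := R.linear
  have nqp : ¬ R.le q p := fun h => hpq' (antisymm_of R.le hpq h)
  rcases hα with rfl | rfl <;> rcases hβ with rfl | rfl
  exacts [absurd rfl n1, ⟨rfl, rfl⟩, absurd h1 nqp, absurd rfl n1]

lemma chain3 (R : OrdBin ι) {p q r α β γ : R.V} (hpq : R.le p q) (hqr : R.le q r)
    (hpq' : p ≠ q) (hqr' : q ≠ r) (hpr' : p ≠ r)
    (hα : α = p ∨ α = q ∨ α = r) (hβ : β = p ∨ β = q ∨ β = r) (hγ : γ = p ∨ γ = q ∨ γ = r)
    (h1 : R.le α β) (h2 : R.le β γ)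
    (n1 : α ≠ β) (n2 : β ≠ γ) (n3 : α ≠ γ) :
    α = p ∧ β = q ∧ γ = r := by
  haveI := R.linear
  have hpr : R.le p r := trans_of R.le hpq hqr
  have nqp : ¬ R.le q p := fun h => hpq' (antisymm_of R.le hpq h)
  have nrq : ¬ R.le r q := fun h => hqr' (antisymm_of R.le hqr h)
  have nrp : ¬ R.le r p := fun h => hpr' (antisymm_of R.le hpr h)
  rcases hα with rfl | rfl | rfl <;> rcases hβ with rfl | rfl | rfl <;>
    rcases hγ with rfl | rfl | rfl <;>
    first
      | exact ⟨rfl, rfl, rfl⟩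
      | exact absurd rfl n1
      | exact absurd rfl n2
      | exact absurd rfl n3
      | exact absurd h1 nqp
      | exact absurd h1 nrq
      | exact absurd h1 nrp
      | exact absurd h2 nqp
      | exact absurd h2 nrq
      | exact absurd h2 nrp

lemma iso1 (R : OrdBin ι) {x y : R.V} (h : Iso (R.restrict {x}) (R.restrict {y})) :
    ∀ i, R.rel i x x ↔ R.rel i y y := by
  obtain ⟨e, _, hrel⟩ := h
  have hx : x ∈ ({x} : Set R.V) := Set.mem_singleton x
  have hy : (e ⟨x, hx⟩).1 = y := (e ⟨x, hx⟩).2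
  intro i
  have h1 : R.rel i x x ↔ R.rel i (e ⟨x, hx⟩).1 (e ⟨x, hx⟩).1 := hrel i ⟨x, hx⟩ ⟨x, hx⟩
  rwa [hy] at h1

lemma iso2 (R : OrdBin ι) {a b p q : R.V} (hab : R.le a b) (hab' : a ≠ b)
    (hpq : R.le p q) (hpq' : p ≠ q)
    (h : Iso (R.restrict {a, b}) (R.restrict {p, q})) :
    dEq R a b p q ∧ (∀ i, (R.rel i a a ↔ R.rel i p p) ∧ (R.rel i b b ↔ R.rel i q q)) := by
  obtain ⟨e, hle, hrel⟩ := h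
  have ha : a ∈ ({a, b} : Set R.V) := Set.mem_insert a _
  have hb : b ∈ ({a, b} : Set R.V) := Set.mem_insert_of_mem _ rfl
  have hmA : (e ⟨a, ha⟩).1 = p ∨ (e ⟨a, ha⟩).1 = q := by
    have h' : (e ⟨a, ha⟩).1 ∈ ({p, q} : Set R.V) := (e ⟨a, ha⟩).2
    rwa [Set.mem_insert_iff, Set.mem_singleton_iff] at h'
  have hmB : (e ⟨b, hb⟩).1 = p ∨ (e ⟨b, hb⟩).1 = q := by
    have h' : (e ⟨b, hb⟩).1 ∈ ({p, q} : Set R.V) := (e ⟨b, hb⟩).2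
    rwa [Set.mem_insert_iff, Set.mem_singleton_iff] at h'
  have hAB : R.le (e ⟨a, ha⟩).1 (e ⟨b, hb⟩).1 := (hle ⟨a, ha⟩ ⟨b, hb⟩).mp hab
  have hnAB : (e ⟨a, ha⟩).1 ≠ (e ⟨b, hb⟩).1 := fun hh =>
    hab' (congrArg Subtype.val (e.injective (Subtype.ext hh)))
  obtain ⟨hA, hB⟩ := chain2 R hpq hpq' hmA hmB hAB hnAB
  constructor
  · intro i
    have h1 : R.rel i a b ↔ R.rel i (e ⟨a, ha⟩).1 (e ⟨b, hb⟩).1 := hrel i ⟨a, ha⟩ ⟨b, hb⟩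
    have h2 : R.rel i b a ↔ R.rel i (e ⟨b, hb⟩).1 (e ⟨a, ha⟩).1 := hrel i ⟨b, hb⟩ ⟨a, ha⟩
    rw [hA, hB] at h1 h2
    exact ⟨h1, h2⟩
  · intro i
    have h1 : R.rel i a a ↔ R.rel i (e ⟨a, ha⟩).1 (e ⟨a, ha⟩).1 := hrel i ⟨a, ha⟩ ⟨a, ha⟩
    have h2 : R.rel i b b ↔ R.rel i (e ⟨b, hb⟩).1 (e ⟨b, hb⟩).1 := hrel i ⟨b, hb⟩ ⟨b, hb⟩
    rw [hA] at h1; rw [hB] at h2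
    exact ⟨h1, h2⟩

lemma iso3 (R : OrdBin ι) {a b c p q r : R.V}
    (hab : R.le a b) (hab' : a ≠ b) (hbc : R.le b c) (hbc' : b ≠ c) (hac' : a ≠ c)
    (hpq : R.le p q) (hpq' : p ≠ q) (hqr : R.le q r) (hqr' : q ≠ r) (hpr' : p ≠ r)
    (h : Iso (R.restrict {a, b, c}) (R.restrict {p, q, r})) :
    dEq R a b p q ∧ dEq R a c p r ∧ dEq R b c q r ∧
      (∀ i, (R.rel i a a ↔ R.rel i p p) ∧ (R.rel i b b ↔ R.rel i q q) ∧
        (R.rel i c c ↔ R.rel i r r)) := by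
  obtain ⟨e, hle, hrel⟩ := h
  have ha : a ∈ ({a, b, c} : Set R.V) := Set.mem_insert a _
  have hb : b ∈ ({a, b, c} : Set R.V) := Set.mem_insert_of_mem _ (Set.mem_insert b _)
  have hc : c ∈ ({a, b, c} : Set R.V) :=
    Set.mem_insert_of_mem _ (Set.mem_insert_of_mem _ rfl)
  have hmA : (e ⟨a, ha⟩).1 = p ∨ (e ⟨a, ha⟩).1 = q ∨ (e ⟨a, ha⟩).1 = r := by
    have h' : (e ⟨a, ha⟩).1 ∈ ({p, q, r} : Set R.V) := (e ⟨a, ha⟩).2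
    rwa [Set.mem_insert_iff, Set.mem_insert_iff, Set.mem_singleton_iff] at h'
  have hmB : (e ⟨b, hb⟩).1 = p ∨ (e ⟨b, hb⟩).1 = q ∨ (e ⟨b, hb⟩).1 = r := by
    have h' : (e ⟨b, hb⟩).1 ∈ ({p, q, r} : Set R.V) := (e ⟨b, hb⟩).2
    rwa [Set.mem_insert_iff, Set.mem_insert_iff, Set.mem_singleton_iff] at h'
  have hmC : (e ⟨c, hc⟩).1 = p ∨ (e ⟨c, hc⟩).1 = q ∨ (e ⟨c, hc⟩).1 = r := by
    have h' : (e ⟨c, hc⟩).1 ∈ ({p, q, r} : Set R.V) := (e ⟨c, hc⟩).2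
    rwa [Set.mem_insert_iff, Set.mem_insert_iff, Set.mem_singleton_iff] at h'
  have hAB : R.le (e ⟨a, ha⟩).1 (e ⟨b, hb⟩).1 := (hle ⟨a, ha⟩ ⟨b, hb⟩).mp hab
  have hBC : R.le (e ⟨b, hb⟩).1 (e ⟨c, hc⟩).1 := (hle ⟨b, hb⟩ ⟨c, hc⟩).mp hbc
  have hnAB : (e ⟨a, ha⟩).1 ≠ (e ⟨b, hb⟩).1 := fun hh =>
    hab' (congrArg Subtype.val (e.injective (Subtype.ext hh)))
  have hnBC : (e ⟨b, hb⟩).1 ≠ (e ⟨c, hc⟩).1 := fun hh =>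
    hbc' (congrArg Subtype.val (e.injective (Subtype.ext hh)))
  have hnAC : (e ⟨a, ha⟩).1 ≠ (e ⟨c, hc⟩).1 := fun hh =>
    hac' (congrArg Subtype.val (e.injective (Subtype.ext hh)))
  obtain ⟨hA, hB, hC⟩ := chain3 R hpq hqr hpq' hqr' hpr' hmA hmB hmC hAB hBC hnAB hnBC hnAC
  refine ⟨fun i => ?_, fun i => ?_, fun i => ?_, fun i => ?_⟩
  · have h1 : R.rel i a b ↔ R.rel i (e ⟨a, ha⟩).1 (e ⟨b, hb⟩).1 := hrel i ⟨a, ha⟩ ⟨b, hb⟩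
    have h2 : R.rel i b a ↔ R.rel i (e ⟨b, hb⟩).1 (e ⟨a, ha⟩).1 := hrel i ⟨b, hb⟩ ⟨a, ha⟩
    rw [hA, hB] at h1 h2; exact ⟨h1, h2⟩
  · have h1 : R.rel i a c ↔ R.rel i (e ⟨a, ha⟩).1 (e ⟨c, hc⟩).1 := hrel i ⟨a, ha⟩ ⟨c, hc⟩
    have h2 : R.rel i c a ↔ R.rel i (e ⟨c, hc⟩).1 (e ⟨a, ha⟩).1 := hrel i ⟨c, hc⟩ ⟨a, ha⟩
    rw [hA, hC] at h1 h2; exact ⟨h1, h2⟩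
  · have h1 : R.rel i b c ↔ R.rel i (e ⟨b, hb⟩).1 (e ⟨c, hc⟩).1 := hrel i ⟨b, hb⟩ ⟨c, hc⟩
    have h2 : R.rel i c b ↔ R.rel i (e ⟨c, hc⟩).1 (e ⟨b, hb⟩).1 := hrel i ⟨c, hc⟩ ⟨b, hb⟩
    rw [hB, hC] at h1 h2; exact ⟨h1, h2⟩
  · have h1 : R.rel i a a ↔ R.rel i (e ⟨a, ha⟩).1 (e ⟨a, ha⟩).1 := hrel i ⟨a, ha⟩ ⟨a, ha⟩
    have h2 : R.rel i b b ↔ R.rel i (e ⟨b, hb⟩).1 (e ⟨b, hb⟩).1 := hrel i ⟨b, hb⟩ ⟨b, hb⟩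
    have h3 : R.rel i c c ↔ R.rel i (e ⟨c, hc⟩).1 (e ⟨c, hc⟩).1 := hrel i ⟨c, hc⟩ ⟨c, hc⟩
    rw [hA] at h1; rw [hB] at h2; rw [hC] at h3
    exact ⟨h1, h2, h3⟩

end OrdBin
namespace OrdBin

variable {ι : Type}

lemma construct (R : OrdBin ι) {x y : R.V} (hxy : R.le x y) (hne : x ≠ y)
    (h0 : EqM R 0 x y) (h1 : EqM R 1 x y) (h2 : EqM R 2 x y)
    {F : Set R.V} (hF : F.Finite) (hxF : x ∉ F) (hyF : y ∉ F) :
    EqF R F x y := by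
  haveI := R.linear
  classical
  have letrans : ∀ {a b c : R.V}, R.le a b → R.le b c → R.le a c :=
    fun h h' => trans_of R.le h h'
  have leanti : ∀ {a b : R.V}, R.le a b → R.le b a → a = b :=
    fun h h' => antisymm_of R.le h h'
  have letot : ∀ a b : R.V, R.le a b ∨ R.le b a := fun a b => total_of R.le a b
  have lerefl : ∀ a : R.V, R.le a a := fun a => refl_of R.le a
  -- diagonal fact for x,y
  have hdiag_xy : ∀ i, R.rel i x x ↔ R.rel i y y := by
    have h : Iso (R.restrict (insert x (∅ : Set R.V))) (R.restrict (insert y ∅)) :=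
      h0 ∅ Set.finite_empty (by simp) (by simp) (by simp)
    rw [insert_empty_eq, insert_empty_eq] at h
    exact iso1 R h
  -- F1 : the one-point fact for middles
  have F1 : ∀ u, R.le x u → u ≠ x → R.le u y → u ≠ y →
      dEq R x u u y ∧ (∀ i, (R.rel i x x ↔ R.rel i u u) ∧ (R.rel i u u ↔ R.rel i y y)) := by
    intro u hxu hux huy huy'
    have h : Iso (R.restrict (insert x {u})) (R.restrict (insert y {u})) :=
      h1 {u} (Set.finite_singleton u) (Set.ncard_singleton u)
        (by simp [Ne.symm hux]) (by simp [Ne.symm huy'])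
    rw [show (insert y {u} : Set R.V) = {u, y} from Set.pair_comm y u] at h
    exact iso2 R hxu (Ne.symm hux) huy huy' h
  have Kdiag : ∀ p, R.le x p → R.le p y → ∀ i, R.rel i p p ↔ R.rel i x x := by
    intro p h1p h2p i
    by_cases hp : p = x
    · rw [hp]
    by_cases hp' : p = y
    · rw [hp']; exact (hdiag_xy i).symm
    · exact ((F1 p h1p hp h2p hp').2 i).1.symm
  have KoutLow : ∀ z, R.le z x → z ≠ x → ∀ p, R.le x p → R.le p y → dEq R p z x z := by
    intro z hzx hzx' p hxp hpy
    have hzy : R.le z y := letrans hzx hxy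
    have hzy' : z ≠ y := fun hzyeq => hne (leanti hxy (hzyeq ▸ hzx))
    by_cases hp : p = x
    · rw [hp]; exact fun i => ⟨Iff.rfl, Iff.rfl⟩
    by_cases hp' : p = y
    · have h : Iso (R.restrict (insert x {z})) (R.restrict (insert y {z})) :=
        h1 {z} (Set.finite_singleton z) (Set.ncard_singleton z)
          (by simp [Ne.symm hzx']) (by simp [Ne.symm hzy'])
      rw [show (insert x {z} : Set R.V) = {z, x} from Set.pair_comm x z,
          show (insert y {z} : Set R.V) = {z, y} from Set.pair_comm y z] at h
      have dd := (iso2 R hzx hzx' hzy hzy' h).1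
      rw [hp']
      exact fun i => ⟨(dd i).2.symm, (dd i).1.symm⟩
    · have hzp' : z ≠ p := fun hzp => hp (leanti (hzp ▸ hzx) hxp)
      have hzp : R.le z p := letrans hzx hxp
      have h : Iso (R.restrict (insert x {p, z})) (R.restrict (insert y {p, z})) :=
        h2 {p, z} ((Set.finite_singleton z).insert p) (Set.ncard_pair (Ne.symm hzp'))
          (by simp [Ne.symm hp, Ne.symm hzx']) (by simp [Ne.symm hp', Ne.symm hzy'])
      have e1 : (insert x {p, z} : Set R.V) = {z, x, p} := by
        ext v; simp only [Set.mem_insert_iff, Set.mem_singleton_iff]; tauto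
      have e2 : (insert y {p, z} : Set R.V) = {z, p, y} := by
        ext v; simp only [Set.mem_insert_iff, Set.mem_singleton_iff]; tauto
      rw [e1, e2] at h
      have big := iso3 R hzx hzx' hxp (Ne.symm hp) hzp' hzp hzp' hpy hp' hzy' h
      exact fun i => ⟨(big.1 i).2.symm, (big.1 i).1.symm⟩
  have KoutHigh : ∀ z, R.le y z → z ≠ y → ∀ p, R.le x p → R.le p y → dEq R p z x z := by
    intro z hyz hzy' p hxp hpy
    have hxz : R.le x z := letrans hxy hyz
    have hxz' : x ≠ z := fun hxzeq => hne (leanti hxy (hxzeq ▸ hyz))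
    by_cases hp : p = x
    · rw [hp]; exact fun i => ⟨Iff.rfl, Iff.rfl⟩
    by_cases hp' : p = y
    · have h : Iso (R.restrict (insert x {z})) (R.restrict (insert y {z})) :=
        h1 {z} (Set.finite_singleton z) (Set.ncard_singleton z)
          (by simp [hxz']) (by simp [Ne.symm hzy'])
      have dd := (iso2 R hxz hxz' hyz (Ne.symm hzy') h).1
      rw [hp']
      exact fun i => ⟨(dd i).1.symm, (dd i).2.symm⟩
    · have hpz' : p ≠ z := fun hpz => hp' (leanti hpy (hpz ▸ hyz))
      have hpz : R.le p z := letrans hpy hyz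
      have h : Iso (R.restrict (insert x {p, z})) (R.restrict (insert y {p, z})) :=
        h2 {p, z} ((Set.finite_singleton z).insert p) (Set.ncard_pair hpz')
          (by simp [Ne.symm hp, hxz']) (by simp [Ne.symm hp', Ne.symm hzy'])
      have e2 : (insert y {p, z} : Set R.V) = {p, y, z} := by
        ext v; simp only [Set.mem_insert_iff, Set.mem_singleton_iff]; tauto
      rw [e2] at h
      have big := iso3 R hxp (Ne.symm hp) hpz hpz' hxz' hpy hp' hyz (Ne.symm hzy') hpz' h
      exact fun i => ⟨(big.2.1 i).1.symm, (big.2.1 i).2.symm⟩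
  have Kout : ∀ z, ((R.le z x ∧ z ≠ x) ∨ (R.le y z ∧ z ≠ y)) →
      ∀ p, R.le x p → R.le p y → ∀ q, R.le x q → R.le q y → dEq R p z q z := by
    intro z hz p hxp hpy q hxq hqy i
    rcases hz with ⟨h1z, h2z⟩ | ⟨h1z, h2z⟩
    · have d1 := KoutLow z h1z h2z p hxp hpy i
      have d2 := KoutLow z h1z h2z q hxq hqy i
      exact ⟨d1.1.trans d2.1.symm, d1.2.trans d2.2.symm⟩
    · have d1 := KoutHigh z h1z h2z p hxp hpy i
      have d2 := KoutHigh z h1z h2z q hxq hqy i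
      exact ⟨d1.1.trans d2.1.symm, d1.2.trans d2.2.symm⟩
  -- anchor
  have key : ∀ v w, R.le x v → v ≠ x → v ≠ y → R.le w y → w ≠ y → w ≠ x →
      R.le v w → v ≠ w → dEq R x v x w := by
    intro v w hxv hvx hvy hwy hwy' hwx hvw hvw'
    have hxw : R.le x w := letrans hxv hvw
    have hvy2 : R.le v y := letrans hvw hwy
    have h : Iso (R.restrict (insert x {v, w})) (R.restrict (insert y {v, w})) :=
      h2 {v, w} ((Set.finite_singleton w).insert v) (Set.ncard_pair hvw')
        (by simp [Ne.symm hvx, Ne.symm hwx]) (by simp [Ne.symm hvy, Ne.symm hwy'])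
    have e2 : (insert y {v, w} : Set R.V) = {v, w, y} := by
      ext t; simp only [Set.mem_insert_iff, Set.mem_singleton_iff]; tauto
    rw [e2] at h
    have big := iso3 R hxv (Ne.symm hvx) hvw hvw' (Ne.symm hwx) hvw hvw' hwy hwy' hvy h
    -- big.2.1 : dEq x w v y ; F1 v : dEq x v v y
    have f1 := (F1 v hxv hvx hvy2 hvy).1
    exact fun i => ⟨((big.2.1 i).1.trans ((f1 i).1).symm).symm,
      ((big.2.1 i).2.trans ((f1 i).2).symm).symm⟩
  have Kanchor : ∀ v, R.le x v → v ≠ x → R.le v y → v ≠ y →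
      ∀ w, R.le x w → w ≠ x → R.le w y → w ≠ y → dEq R x v x w := by
    intro v hxv hvx hvy hvy' w hxw hwx hwy hwy'
    by_cases hvw : v = w
    · rw [hvw]; exact fun i => ⟨Iff.rfl, Iff.rfl⟩
    rcases letot v w with h | h
    · exact key v w hxv hvx hvy' hwy hwy' hwx h hvw
    · have d := key w v hxw hwx hwy' hvy hvy' hvx h (Ne.symm hvw)
      exact fun i => ⟨(d i).1.symm, (d i).2.symm⟩
  -- pairs inside the interval
  have red : ∀ p q, R.le x p → R.le p q → p ≠ q → R.le q y → ¬(p = x ∧ q = y) →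
      ∃ m, (R.le x m ∧ m ≠ x ∧ R.le m y ∧ m ≠ y) ∧ dEq R p q x m := by
    intro p q hxp hpq hpq' hqy hnxy
    by_cases hp : p = x
    · subst hp
      have hqx : q ≠ p := Ne.symm hpq'
      have hqy' : q ≠ y := fun h => hnxy ⟨rfl, h⟩
      exact ⟨q, ⟨hpq, hqx, hqy, hqy'⟩, fun i => ⟨Iff.rfl, Iff.rfl⟩⟩
    · have hpy' : p ≠ y := by
        intro h
        apply hpq'
        apply leanti hpq
        rw [h]; exact hqy
      by_cases hq : q = y
      · subst hq
        have f1 := (F1 p hxp hp hpq hpy').1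
        exact ⟨p, ⟨hxp, hp, hpq, hpy'⟩, fun i => ⟨(f1 i).1.symm, (f1 i).2.symm⟩⟩
      · have hqx : q ≠ x := by
          intro h
          apply hp
          apply leanti _ hxp
          rw [← h]; exact hpq
        have hqy2 : R.le q y := hqy
        have h : Iso (R.restrict (insert x {p, q})) (R.restrict (insert y {p, q})) :=
          h2 {p, q} ((Set.finite_singleton q).insert p) (Set.ncard_pair hpq')
            (by simp [Ne.symm hp, Ne.symm hqx]) (by simp [Ne.symm hpy', Ne.symm hq])
        have e2 : (insert y {p, q} : Set R.V) = {p, q, y} := by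
          ext t; simp only [Set.mem_insert_iff, Set.mem_singleton_iff]; tauto
        rw [e2] at h
        have big := iso3 R hxp (Ne.symm hp) hpq hpq' (Ne.symm hqx) hpq hpq' hqy2 hq hpy' h
        exact ⟨p, ⟨hxp, hp, letrans hpq hqy, hpy'⟩,
          fun i => ⟨(big.1 i).1.symm, (big.1 i).2.symm⟩⟩
  have Kpair : ∀ p q, R.le x p → R.le p q → p ≠ q → R.le q y → ¬(p = x ∧ q = y) →
      ∀ p' q', R.le x p' → R.le p' q' → p' ≠ q' → R.le q' y → ¬(p' = x ∧ q' = y) →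
      dEq R p q p' q' := by
    intro p q a1 a2 a3 a4 a5 p' q' b1 b2 b3 b4 b5
    obtain ⟨m, hm, dm⟩ := red p q a1 a2 a3 a4 a5
    obtain ⟨m', hm', dm'⟩ := red p' q' b1 b2 b3 b4 b5
    have da := Kanchor m hm.1 hm.2.1 hm.2.2.1 hm.2.2.2 m' hm'.1 hm'.2.1 hm'.2.2.1 hm'.2.2.2
    exact fun i => ⟨(dm i).1.trans ((da i).1.trans ((dm' i).1.symm)),
      (dm i).2.trans ((da i).2.trans ((dm' i).2.symm))⟩
  -- now the construction of the isomorphism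
  letI : LinearOrder R.V := R.LO
  set M : Set R.V := {v | v ∈ F ∧ R.le x v ∧ v ≠ x ∧ R.le v y ∧ v ≠ y} with hM
  have hMfin : M.Finite := hF.subset fun v hv => hv.1
  set m : Finset R.V := hMfin.toFinset with hmdef
  have hmem_m : ∀ v, v ∈ m ↔ v ∈ M := fun v => hMfin.mem_toFinset
  have hxm : x ∉ m := by rw [hmem_m]; exact fun h => hxF h.1
  have hym : y ∉ m := by rw [hmem_m]; exact fun h => hyF h.1
  set c₁ : Finset R.V := insert x m with hc₁def
  set c₂ : Finset R.V := insert y m with hc₂def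
  have hcard : c₂.card = c₁.card := by
    rw [hc₁def, hc₂def, Finset.card_insert_of_notMem hxm, Finset.card_insert_of_notMem hym]
  set e : {v // v ∈ c₁} ≃o {v // v ∈ c₂} :=
    (c₁.orderIsoOfFin rfl).symm.trans (c₂.orderIsoOfFin hcard) with hedef
  set g : R.V → R.V := fun v => if h : v ∈ c₁ then (e ⟨v, h⟩ : R.V) else v with hgdef
  have hgc : ∀ v (h : v ∈ c₁), g v = (e ⟨v, h⟩ : R.V) := fun v h => dif_pos h
  have hgn : ∀ v, v ∉ c₁ → g v = v := fun v h => dif_neg h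
  have hc₁ : ∀ v, v ∈ c₁ ↔ v = x ∨ v ∈ M := by
    intro v; rw [hc₁def, Finset.mem_insert, hmem_m]
  have hc₂ : ∀ v, v ∈ c₂ ↔ v = y ∨ v ∈ M := by
    intro v; rw [hc₂def, Finset.mem_insert, hmem_m]
  have hc₁P : ∀ v, v ∈ c₁ → R.le x v ∧ R.le v y ∧ v ≠ y := by
    intro v hv
    rcases (hc₁ v).mp hv with rfl | hv'
    · exact ⟨lerefl v, hxy, hne⟩
    · exact ⟨hv'.2.1, hv'.2.2.2.1, hv'.2.2.2.2⟩
  have hc₂P : ∀ v, v ∈ c₂ → R.le x v ∧ v ≠ x ∧ R.le v y := by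
    intro v hv
    rcases (hc₂ v).mp hv with rfl | hv'
    · exact ⟨hxy, Ne.symm hne, lerefl v⟩
    · exact ⟨hv'.2.1, hv'.2.2.1, hv'.2.2.2.1⟩
  have hgc₂ : ∀ v (h : v ∈ c₁), g v ∈ c₂ := fun v h => by
    rw [hgc v h]; exact (e ⟨v, h⟩).2
  have hele : ∀ v w (hv : v ∈ c₁) (hw : w ∈ c₁), R.le v w ↔ R.le (g v) (g w) := by
    intro v w hv hw
    rw [hgc v hv, hgc w hw]
    constructor
    · intro h
      exact Subtype.coe_le_coe.mpr (e.le_iff_le.mpr (Subtype.mk_le_mk.mpr h))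
    · intro h
      exact Subtype.mk_le_mk.mp (e.le_iff_le.mp (Subtype.coe_le_coe.mp h))
  have hene : ∀ v w (hv : v ∈ c₁) (hw : w ∈ c₁), v ≠ w → g v ≠ g w := by
    intro v w hv hw hvw h
    rw [hgc v hv, hgc w hw] at h
    exact hvw (congrArg Subtype.val (e.injective (Subtype.ext h)))
  have hZ : ∀ v, v ∈ insert x F → v ∉ c₁ →
      v ∈ F ∧ ((R.le v x ∧ v ≠ x) ∨ (R.le y v ∧ v ≠ y)) := by
    intro v hv hvc
    have hvF : v ∈ F := by
      rcases Set.mem_insert_iff.mp hv with rfl | h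
      · exact absurd ((hc₁ v).mpr (Or.inl rfl)) hvc
      · exact h
    have hvx : v ≠ x := fun h => hxF (h ▸ hvF)
    have hvy : v ≠ y := fun h => hyF (h ▸ hvF)
    refine ⟨hvF, ?_⟩
    rcases letot v x with h | h
    · exact Or.inl ⟨h, hvx⟩
    · rcases letot v y with h' | h'
      · exact absurd ((hc₁ v).mpr (Or.inr ⟨hvF, h, hvx, h', hvy⟩)) hvc
      · exact Or.inr ⟨h', hvy⟩
  have hOut : ∀ v, v ∈ insert x F → v ∉ c₁ →
      (R.le v x ∧ v ≠ x) ∨ (R.le y v ∧ v ≠ y) := fun v h h' => (hZ v h h').2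
  have hc₁S : ∀ v, v ∈ c₁ → v ∈ insert x F := by
    intro v hv
    rcases (hc₁ v).mp hv with rfl | h
    · exact Set.mem_insert _ _
    · exact Set.mem_insert_of_mem _ h.1
  have hc₂T : ∀ v, v ∈ c₂ → v ∈ insert y F := by
    intro v hv
    rcases (hc₂ v).mp hv with rfl | h
    · exact Set.mem_insert _ _
    · exact Set.mem_insert_of_mem _ h.1
  have hnc₂ : ∀ v, v ∈ insert x F → v ∉ c₁ → v ∉ c₂ := by
    intro v hv hvc h
    rcases (hc₂ v).mp h with rfl | h'
    · exact hyF (hZ v hv hvc).1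
    · exact hvc ((hc₁ v).mpr (Or.inr h'))
  have hmaps : ∀ v, v ∈ insert x F → g v ∈ insert y F := by
    intro v hv
    by_cases h : v ∈ c₁
    · exact hc₂T _ (hgc₂ v h)
    · rw [hgn v h]; exact Set.mem_insert_of_mem _ (hZ v hv h).1
  have hinj : ∀ u, u ∈ insert x F → ∀ v, v ∈ insert x F → g u = g v → u = v := by
    intro u hu v hv huv
    by_cases hu1 : u ∈ c₁ <;> by_cases hv1 : v ∈ c₁
    · by_contra hne'
      exact hene u v hu1 hv1 hne' huv
    · exfalso
      rw [hgn v hv1] at huv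
      exact hnc₂ v hv hv1 (huv ▸ hgc₂ u hu1)
    · exfalso
      rw [hgn u hu1] at huv
      exact hnc₂ u hu hu1 (by rw [huv]; exact hgc₂ v hv1)
    · rw [hgn u hu1, hgn v hv1] at huv; exact huv
  have hsurj : ∀ w, w ∈ insert y F → ∃ v, v ∈ insert x F ∧ g v = w := by
    intro w hw
    by_cases h : w ∈ c₂
    · refine ⟨(e.symm ⟨w, h⟩ : R.V), hc₁S _ (e.symm ⟨w, h⟩).2, ?_⟩
      rw [hgc _ (e.symm ⟨w, h⟩).2]
      have heta : (⟨(e.symm ⟨w, h⟩ : R.V), (e.symm ⟨w, h⟩).2⟩ : {v // v ∈ c₁}) =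
          e.symm ⟨w, h⟩ := Subtype.ext rfl
      rw [heta, OrderIso.apply_symm_apply]
    · have hwS : w ∈ insert x F ∧ w ∉ c₁ := by
        rcases Set.mem_insert_iff.mp hw with rfl | hwF
        · exact absurd ((hc₂ w).mpr (Or.inl rfl)) h
        · refine ⟨Set.mem_insert_of_mem _ hwF, ?_⟩
          intro hc
          rcases (hc₁ w).mp hc with rfl | h'
          · exact hxF hwF
          · exact h ((hc₂ w).mpr (Or.inr h'))
      exact ⟨w, hwS.1, hgn w hwS.2⟩
  have hgle : ∀ v w, v ∈ insert x F → w ∈ insert x F → (R.le v w ↔ R.le (g v) (g w)) := by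
    intro v w hv hw
    by_cases h1 : v ∈ c₁ <;> by_cases h2 : w ∈ c₁
    · exact hele v w h1 h2
    · obtain ⟨hxv, hvy, hvy'⟩ := hc₁P v h1
      obtain ⟨hxgv, hgvx, hgvy⟩ := hc₂P _ (hgc₂ v h1)
      rw [hgn w h2]
      rcases hOut w hw h2 with ⟨hwx, hwx'⟩ | ⟨hyw, hwy'⟩
      · refine iff_of_false (fun h => ?_) (fun h => ?_)
        · exact h2 ((leanti h (letrans hwx hxv)) ▸ h1)
        · exact hnc₂ w hw h2 ((leanti h (letrans hwx hxgv)) ▸ hgc₂ v h1)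
      · exact iff_of_true (letrans hvy hyw) (letrans hgvy hyw)
    · obtain ⟨hxw, hwy, hwy'⟩ := hc₁P w h2
      obtain ⟨hxgw, hgwx, hgwy⟩ := hc₂P _ (hgc₂ w h2)
      rw [hgn v h1]
      rcases hOut v hv h1 with ⟨hvx, hvx'⟩ | ⟨hyv, hvy'⟩
      · exact iff_of_true (letrans hvx hxw) (letrans hvx hxgw)
      · refine iff_of_false (fun h => ?_) (fun h => ?_)
        · exact hvy' (leanti (letrans h hwy) hyv)
        · exact hvy' (leanti (letrans h hgwy) hyv)
    · rw [hgn v h1, hgn w h2]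
  have hgrel : ∀ (i : ι) v w, v ∈ insert x F → w ∈ insert x F →
      (R.rel i v w ↔ R.rel i (g v) (g w)) := by
    intro i v w hv hw
    by_cases h1 : v ∈ c₁ <;> by_cases h2 : w ∈ c₁
    · obtain ⟨hxv, hvy, hvy'⟩ := hc₁P v h1
      obtain ⟨hxw, hwy, hwy'⟩ := hc₁P w h2
      obtain ⟨hxgv, hgvx, hgvy⟩ := hc₂P _ (hgc₂ v h1)
      obtain ⟨hxgw, hgwx, hgwy⟩ := hc₂P _ (hgc₂ w h2)
      by_cases hvw : v = w
      · subst hvw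
        exact (Kdiag v hxv hvy i).trans (Kdiag (g v) hxgv hgvy i).symm
      · have hgvw : g v ≠ g w := hene v w h1 h2 hvw
        rcases letot v w with h | h
        · have h' : R.le (g v) (g w) := (hele v w h1 h2).mp h
          have dd := Kpair v w hxv h hvw hwy (fun hcon => hwy' hcon.2)
            (g v) (g w) hxgv h' hgvw hgwy (fun hcon => hgvx hcon.1)
          exact (dd i).1
        · have h' : R.le (g w) (g v) := (hele w v h2 h1).mp h
          have dd := Kpair w v hxw h (Ne.symm hvw) hvy (fun hcon => hvy' hcon.2)
            (g w) (g v) hxgw h' (Ne.symm hgvw) hgvy (fun hcon => hgwx hcon.1)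
          exact (dd i).2
    · obtain ⟨hxv, hvy, _⟩ := hc₁P v h1
      obtain ⟨hxgv, _, hgvy⟩ := hc₂P _ (hgc₂ v h1)
      rw [hgn w h2]
      have dd := Kout w (hOut w hw h2) v hxv hvy (g v) hxgv hgvy
      exact (dd i).1
    · obtain ⟨hxw, hwy, _⟩ := hc₁P w h2
      obtain ⟨hxgw, _, hgwy⟩ := hc₂P _ (hgc₂ w h2)
      rw [hgn v h1]
      have dd := Kout v (hOut v hv h1) w hxw hwy (g w) hxgw hgwy
      exact (dd i).2
    · rw [hgn v h1, hgn w h2]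
  have hbijv : Function.Bijective
      (fun a : ↥(insert x F) => (⟨g a.1, hmaps a.1 a.2⟩ : ↥(insert y F))) := by
    constructor
    · intro a b hab
      exact Subtype.ext (hinj a.1 a.2 b.1 b.2 (congrArg Subtype.val hab))
    · intro b
      obtain ⟨v, hvS, hgv⟩ := hsurj b.1 b.2
      exact ⟨⟨v, hvS⟩, Subtype.ext hgv⟩
  exact ⟨Equiv.ofBijective _ hbijv, fun a b => hgle a.1 b.1 a.2 b.2,
    fun i a b => hgrel i a.1 b.1 a.2 b.2⟩

end OrdBin
namespace OrdBin

variable {ι : Type}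

lemma full (R : OrdBin ι) {x y : R.V} (h0 : EqM R 0 x y) (h1 : EqM R 1 x y)
    (h2 : EqM R 2 x y) (m : ℕ) : EqM R m x y := by
  haveI := R.linear
  by_cases hxy : x = y
  · subst hxy; exact eqM_refl R m x
  rcases total_of R.le x y with h | h
  · intro F hFf _ hx hy
    exact construct R h hxy h0 h1 h2 hFf hx hy
  · intro F hFf _ hx hy
    exact iso_symm (construct R h (Ne.symm hxy) (eqM_symm h0) (eqM_symm h1) (eqM_symm h2)
      hFf hy hx)

lemma eqM_zero_iff (R : OrdBin ι) (x y : R.V) :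
    EqM R 0 x y ↔ ∀ i, R.rel i x x ↔ R.rel i y y := by
  haveI := R.linear
  constructor
  · intro h
    have h' : Iso (R.restrict (insert x (∅ : Set R.V))) (R.restrict (insert y ∅)) :=
      h ∅ Set.finite_empty (by simp) (by simp) (by simp)
    rw [insert_empty_eq, insert_empty_eq] at h'
    exact iso1 R h'
  · intro h F hFf hc hx hy
    have hFe : F = ∅ := (Set.ncard_eq_zero hFf).mp hc
    subst hFe
    refine ⟨⟨fun _ => ⟨y, Set.mem_insert y ∅⟩, fun _ => ⟨x, Set.mem_insert x ∅⟩, ?_, ?_⟩, ?_, ?_⟩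
    · intro a
      apply Subtype.ext
      have := a.2
      simp only [Set.mem_insert_iff, Set.mem_empty_iff_false, or_false] at this
      simp [this]
    · intro a
      apply Subtype.ext
      have := a.2
      simp only [Set.mem_insert_iff, Set.mem_empty_iff_false, or_false] at this
      simp [this]
    · intro a b
      have ha := a.2; have hb := b.2
      simp only [Set.mem_insert_iff, Set.mem_empty_iff_false, or_false] at ha hb
      show R.le a.1 b.1 ↔ R.le y y
      rw [ha, hb]
      exact iff_of_true (refl_of R.le x) (refl_of R.le y)
    · intro i a b
      have ha := a.2; have hb := b.2
      simp only [Set.mem_insert_iff, Set.mem_empty_iff_false, or_false] at ha hb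
      show R.rel i a.1 b.1 ↔ R.rel i y y
      rw [ha, hb]
      exact h i

end OrdBin

lemma key_pigeon {α : Type} {β : Type} [Finite β] (E : α → α → Prop)
    (hsymm : ∀ {a b}, E a b → E b a) (htrans : ∀ {a b c}, E a b → E b c → E a c)
    (hinf : {A : Set α | ∃ a, A = {y | E a y}}.Infinite) (f : α → β) :
    ∃ B : Set α, B.Infinite ∧ (∀ x ∈ B, ∀ y ∈ B, x ≠ y → ¬ E x y) ∧
      (∀ x ∈ B, ∀ y ∈ B, f x = f y) := by
  classical
  set S := {A : Set α | ∃ a, A = {y | E a y}} with hS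
  haveI : Infinite ↥S := hinf.to_subtype
  let rep : ↥S → α := fun A => A.2.choose
  have hrep : ∀ A : ↥S, A.1 = {y | E (rep A) y} := fun A => A.2.choose_spec
  have hrepinj : Function.Injective rep := by
    intro A B h
    apply Subtype.ext
    rw [hrep A, hrep B, h]
  obtain ⟨c, hc⟩ := Finite.exists_infinite_fiber (f ∘ rep)
  have hTinf : ((f ∘ rep) ⁻¹' {c} : Set ↥S).Infinite := Set.infinite_coe_iff.mp hc
  refine ⟨rep '' ((f ∘ rep) ⁻¹' {c}), hTinf.image (Set.injOn_of_injective hrepinj), ?_, ?_⟩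
  · rintro u ⟨A, hA, rfl⟩ v ⟨B, hB, rfl⟩ hne hE
    have hAB : A = B := by
      apply Subtype.ext
      rw [hrep A, hrep B]
      ext z
      exact ⟨fun h => htrans (hsymm hE) h, fun h => htrans hE h⟩
    exact hne (by rw [hAB])
  · rintro u ⟨A, hA, rfl⟩ v ⟨B, hB, rfl⟩
    have hA' : f (rep A) = c := hA
    have hB' : f (rep B) = c := hB
    rw [hA', hB']
/-- If `≃_R` has infinitely many equivalence classes on an ordered binary
structure `R` of type `k`, then either there is an infinite set whose distinct elements are
`0`-equivalent but not `1`-equivalent, or there are two disjoint infinite sets `A₁, A₂`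
whose distinct elements are `1`-equivalent but not `2`-equivalent, and such that between
any two elements of one set there is an element of the other. -/
theorem separation_lemma {k : ℕ} (R : OrdBin (Fin k))
    (hinf : {A : Set R.V | ∃ a : R.V, A = {y | OrdBin.EqR R a y}}.Infinite) :
    (∃ A : Set R.V, A.Infinite ∧
        ∀ x ∈ A, ∀ y ∈ A, x ≠ y → OrdBin.EqM R 0 x y ∧ ¬ OrdBin.EqM R 1 x y) ∨
    (∃ A₁ A₂ : Set R.V, A₁.Infinite ∧ A₂.Infinite ∧ Disjoint A₁ A₂ ∧
        (∀ x ∈ A₁, ∀ y ∈ A₁, x ≠ y → OrdBin.EqM R 1 x y ∧ ¬ OrdBin.EqM R 2 x y) ∧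
        (∀ x ∈ A₂, ∀ y ∈ A₂, x ≠ y → OrdBin.EqM R 1 x y ∧ ¬ OrdBin.EqM R 2 x y) ∧
        (∀ x ∈ A₁, ∀ y ∈ A₁, R.le x y → x ≠ y → ∃ z ∈ A₂, R.le x z ∧ R.le z y) ∧
        (∀ x ∈ A₂, ∀ y ∈ A₂, R.le x y → x ≠ y → ∃ z ∈ A₁, R.le x z ∧ R.le z y)) := by
  classical
  haveI := R.linear
  by_cases hcase : ∃ A : Set R.V, A.Infinite ∧
      ∀ x ∈ A, ∀ y ∈ A, x ≠ y → OrdBin.EqM R 0 x y ∧ ¬ OrdBin.EqM R 1 x y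
  · exact Or.inl hcase
  right
  set E1 : R.V → R.V → Prop :=
    fun a b => OrdBin.EqM R 0 a b ∧ OrdBin.EqM R 1 a b with hE1def
  set E2 : R.V → R.V → Prop :=
    fun a b => OrdBin.EqM R 0 a b ∧ OrdBin.EqM R 1 a b ∧ OrdBin.EqM R 2 a b with hE2def
  have hE1symm : ∀ {a b}, E1 a b → E1 b a :=
    fun h => ⟨OrdBin.eqM_symm h.1, OrdBin.eqM_symm h.2⟩
  have hE1trans : ∀ {a b c}, E1 a b → E1 b c → E1 a c :=
    fun h h' => ⟨OrdBin.eqM_trans h.1 h'.1, OrdBin.eqM_trans h.2 h'.2⟩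
  have hE2symm : ∀ {a b}, E2 a b → E2 b a :=
    fun h => ⟨OrdBin.eqM_symm h.1, OrdBin.eqM_symm h.2.1, OrdBin.eqM_symm h.2.2⟩
  have hE2trans : ∀ {a b c}, E2 a b → E2 b c → E2 a c :=
    fun h h' => ⟨OrdBin.eqM_trans h.1 h'.1, OrdBin.eqM_trans h.2.1 h'.2.1,
      OrdBin.eqM_trans h.2.2 h'.2.2⟩
  set q0 : R.V → (Fin k → Bool) := fun v i => decide (R.rel i v v) with hq0def
  have hq0 : ∀ a b : R.V, q0 a = q0 b → OrdBin.EqM R 0 a b := by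
    intro a b h
    rw [OrdBin.eqM_zero_iff]
    intro i
    have h' := congrFun h i
    simpa only [hq0def, decide_eq_decide] using h'
  -- if E1 had infinitely many classes, case 1 would hold
  have hE1fin : {A : Set R.V | ∃ a, A = {y | E1 a y}}.Finite := by
    by_contra hcon
    obtain ⟨B, hBinf, hBne, hBc⟩ := key_pigeon E1 hE1symm hE1trans hcon q0
    apply hcase
    refine ⟨B, hBinf, ?_⟩
    intro u hu v hv huv
    have h0 : OrdBin.EqM R 0 u v := hq0 u v (hBc u hu v hv)
    exact ⟨h0, fun h1 => hBne u hu v hv huv ⟨h0, h1⟩⟩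
  -- E2 has infinitely many classes
  have hclass : ∀ a : R.V, {y | OrdBin.EqR R a y} = {y | E2 a y} := by
    intro a
    ext z
    exact ⟨fun h => ⟨h 0, h 1, h 2⟩, fun h m => OrdBin.full R h.1 h.2.1 h.2.2 m⟩
  have hE2inf : {A : Set R.V | ∃ a, A = {y | E2 a y}}.Infinite := by
    have hEq : {A : Set R.V | ∃ a : R.V, A = {y | OrdBin.EqR R a y}} =
        {A : Set R.V | ∃ a, A = {y | E2 a y}} := by
      ext A
      simp only [Set.mem_setOf_eq]
      exact exists_congr fun a => by rw [hclass a]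
    rwa [hEq] at hinf
  haveI : Finite ↥{A : Set R.V | ∃ a, A = {y | E1 a y}} := hE1fin.to_subtype
  obtain ⟨B, hBinf, hBne, hBc⟩ := key_pigeon E2 hE2symm hE2trans hE2inf
    (fun a => (⟨{y | E1 a y}, ⟨a, rfl⟩⟩ : ↥{A : Set R.V | ∃ a, A = {y | E1 a y}}))
  have hBE1 : ∀ u ∈ B, ∀ v ∈ B, E1 u v := by
    intro u hu v hv
    have h := hBc u hu v hv
    have h' : {y | E1 u y} = {y | E1 v y} := congrArg Subtype.val h
    have hu' : u ∈ {y | E1 u y} := ⟨OrdBin.eqM_refl R 0 u, OrdBin.eqM_refl R 1 u⟩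
    rw [h'] at hu'
    exact hE1symm hu'
  have hBprop : ∀ u ∈ B, ∀ v ∈ B, u ≠ v →
      OrdBin.EqM R 1 u v ∧ ¬ OrdBin.EqM R 2 u v := by
    intro u hu v hv huv
    have h1 := hBE1 u hu v hv
    exact ⟨h1.2, fun h2 => hBne u hu v hv huv ⟨h1.1, h1.2, h2⟩⟩
  -- extract a monotone sequence
  letI : LinearOrder R.V := R.LO
  let emb : ℕ ↪ ↥B := hBinf.natEmbedding
  let f : ℕ → R.V := fun n => (emb n).1
  have hfinj : Function.Injective f := fun a b h => emb.injective (Subtype.ext h)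
  have hfmem : ∀ n, f n ∈ B := fun n => (emb n).2
  obtain ⟨gm, hgm⟩ := exists_increasing_or_nonincreasing_subseq (· ≤ · : R.V → R.V → Prop) f
  set h : ℕ → R.V := f ∘ gm with hhdef
  have hhinj : Function.Injective h := hfinj.comp gm.injective
  have hhmem : ∀ n, h n ∈ B := fun n => hfmem (gm n)
  have hmono' : (∀ a b, a < b → R.le (h a) (h b)) ∨ (∀ a b, a < b → R.le (h b) (h a)) := by
    rcases hgm with hm | hm
    · left; intro a b hab; exact hm a b hab
    · right; intro a b hab
      have hnab : ¬ (h a ≤ h b) := hm a b hab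
      exact le_of_not_ge hnab
  clear hgm
  refine ⟨Set.range (fun n => h (2 * n)), Set.range (fun n => h (2 * n + 1)),
    ?_, ?_, ?_, ?_, ?_, ?_, ?_⟩
  · exact Set.infinite_range_of_injective (fun a b hab => by
      have := hhinj hab; omega)
  · exact Set.infinite_range_of_injective (fun a b hab => by
      have := hhinj hab; omega)
  · rw [Set.disjoint_left]
    rintro v ⟨a, rfl⟩ ⟨b, hb⟩
    have := hhinj hb
    omega
  · rintro u ⟨a, rfl⟩ v ⟨b, rfl⟩ huv
    exact hBprop _ (hhmem _) _ (hhmem _) huv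
  · rintro u ⟨a, rfl⟩ v ⟨b, rfl⟩ huv
    exact hBprop _ (hhmem _) _ (hhmem _) huv
  · rintro u ⟨a, rfl⟩ v ⟨b, rfl⟩ hle hne
    have hab : a ≠ b := fun hab => hne (by rw [hab])
    rcases hmono' with hm | hm
    · have hlt : a < b := by
        rcases Nat.lt_or_ge a b with hx | hx
        · exact hx
        · exact absurd (antisymm_of R.le hle (hm (2 * b) (2 * a) (by omega))) hne
      exact ⟨h (2 * a + 1), ⟨a, rfl⟩, hm _ _ (by omega), hm _ _ (by omega)⟩
    · have hlt : b < a := by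
        rcases Nat.lt_or_ge b a with hx | hx
        · exact hx
        · exact absurd (antisymm_of R.le hle (hm (2 * a) (2 * b) (by omega))) hne
      exact ⟨h (2 * b + 1), ⟨b, rfl⟩, hm _ _ (by omega), hm _ _ (by omega)⟩
  · rintro u ⟨a, rfl⟩ v ⟨b, rfl⟩ hle hne
    have hab : a ≠ b := fun hab => hne (by rw [hab])
    rcases hmono' with hm | hm
    · have hlt : a < b := by
        rcases Nat.lt_or_ge a b with hx | hx
        · exact hx
        · exact absurd (antisymm_of R.le hle (hm (2 * b + 1) (2 * a + 1) (by omega))) hne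
      exact ⟨h (2 * (a + 1)), ⟨a + 1, rfl⟩,
        hm _ _ (by omega), hm _ _ (by omega)⟩
    · have hlt : b < a := by
        rcases Nat.lt_or_ge b a with hx | hx
        · exact hx
        · exact absurd (antisymm_of R.le hle (hm (2 * a + 1) (2 * b + 1) (by omega))) hne
      exact ⟨h (2 * (b + 1)), ⟨b + 1, rfl⟩,
        hm _ _ (by omega), hm _ _ (by omega)⟩
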